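/- In the tabular softmax trajectory model, fix logits z : 𝒮 × 𝒜 → ℝ, a direction v : 𝒮 × 𝒜 → ℝ, a nonempty event E ⊆ 𝒜^T, and any function f : 𝒜^T → ℝ. Then, as η → 0, E_{P_{z+ηv}}[f | E] = E_{P_z}[f | E] + η·Cov_{P_z(·|E)}(f, Ψ_{z,v}) + O(η²). -/

import Mathlib

open Finset Filter Asymptotics

noncomputable section

/-- Softmax policy: probability of action `a` in state `s` under logits `z`. -/
def pol {S A : Type*} [Fintype A] (z : S × A → ℝ) (s : S) (a : A) : ℝ :=
  Real.exp (z (s, a)) / ∑ b : A, Real.exp (z (s, b))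

/-- State reached after `n` steps of the deterministic dynamics `δ` from `s0`,
taking actions `y 0, y 1, …`. -/
def stateAt {S A : Type*} (δ : S → A → S) (s0 : S) (y : ℕ → A) : ℕ → S
  | 0 => s0
  | n + 1 => δ (stateAt δ s0 y n) (y n)

/-- State `s_t(y)` from which the `t`-th action of the trajectory `y` is taken. -/
def st {S A : Type*} (δ : S → A → S) (s0 : S) {T : ℕ} (y : Fin T → A) (t : Fin T) : S :=
  stateAt δ s0 (fun n => if h : n < T then y ⟨n, h⟩ else y t) t.val

/-- Trajectory probability `P_z(y) = ∏_t π_z(a_t | s_t(y))`. -/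
def traj {S A : Type*} [Fintype A] (δ : S → A → S) (s0 : S) {T : ℕ}
    (z : S × A → ℝ) (y : Fin T → A) : ℝ :=
  ∏ t : Fin T, pol z (st δ s0 y t) (y t)

/-- Per-token negative log-likelihood `ℓ_z(y)`. -/
def nll {S A : Type*} [Fintype A] (δ : S → A → S) (s0 : S) {T : ℕ}
    (z : S × A → ℝ) (y : Fin T → A) : ℝ :=
  -(1 / (T : ℝ)) * ∑ t : Fin T, Real.log (pol z (st δ s0 y t) (y t))

/-- Centered direction `ṽ_z(s,a) = v(s,a) − ∑_b π_z(b|s) v(s,b)`. -/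
def centered {S A : Type*} [Fintype A] (z v : S × A → ℝ) (s : S) (a : A) : ℝ :=
  v (s, a) - ∑ b : A, pol z s b * v (s, b)

/-- Trajectory score `Ψ_{z,v}(y) = ∑_t ṽ_z(s_t(y), a_t)`. -/
def score {S A : Type*} [Fintype A] (δ : S → A → S) (s0 : S) {T : ℕ}
    (z v : S × A → ℝ) (y : Fin T → A) : ℝ :=
  ∑ t : Fin T, centered z v (st δ s0 y t) (y t)

/-- Conditional expectation `E_{P_z}[f | E]`. -/
def condExp {S A : Type*} [Fintype A] (δ : S → A → S) (s0 : S) {T : ℕ}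
    (z : S × A → ℝ) (E : Finset (Fin T → A)) (f : (Fin T → A) → ℝ) : ℝ :=
  (∑ y ∈ E, traj δ s0 z y * f y) / ∑ y ∈ E, traj δ s0 z y

/-- Conditional covariance `Cov_{P_z(·|E)}(f, g)`. -/
def condCov {S A : Type*} [Fintype A] (δ : S → A → S) (s0 : S) {T : ℕ}
    (z : S × A → ℝ) (E : Finset (Fin T → A)) (f g : (Fin T → A) → ℝ) : ℝ :=
  condExp δ s0 z E (fun y => f y * g y) - condExp δ s0 z E f * condExp δ s0 z E g

section Aux
variable {S A : Type*} [Fintype A] [Nonempty A]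

lemma sumexp_pos (z : S × A → ℝ) (s : S) : 0 < ∑ b : A, Real.exp (z (s, b)) :=
  Finset.sum_pos (fun b _ => Real.exp_pos _) Finset.univ_nonempty

lemma pol_pos (z : S × A → ℝ) (s : S) (a : A) : 0 < pol z s a :=
  div_pos (Real.exp_pos _) (sumexp_pos z s)

lemma traj_pos (δ : S → A → S) (s0 : S) {T : ℕ} (z : S × A → ℝ) (y : Fin T → A) :
    0 < traj δ s0 z y :=
  Finset.prod_pos fun t _ => pol_pos _ _ _

lemma contDiff_pol (z v : S × A → ℝ) (s : S) (a : A) :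
    ContDiff ℝ 2 (fun η : ℝ => pol (z + η • v) s a) := by
  simp only [pol, Pi.add_apply, Pi.smul_apply, smul_eq_mul]
  apply ContDiff.div
  · exact (contDiff_const.add (contDiff_id.mul contDiff_const)).exp
  · exact ContDiff.sum fun b _ => (contDiff_const.add (contDiff_id.mul contDiff_const)).exp
  · intro η
    exact (Finset.sum_pos (fun b _ => Real.exp_pos _) Finset.univ_nonempty).ne'

lemma hasDerivAt_pol (z v : S × A → ℝ) (s : S) (a : A) :
    HasDerivAt (fun η : ℝ => pol (z + η • v) s a)
      (pol z s a * centered z v s a) 0 := by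
  simp only [pol, Pi.add_apply, Pi.smul_apply, smul_eq_mul]
  have hnum : ∀ b : A, HasDerivAt (fun η : ℝ => Real.exp (z (s, b) + η * v (s, b)))
      (Real.exp (z (s, b)) * v (s, b)) 0 := by
    intro b
    have h1 : HasDerivAt (fun η : ℝ => z (s, b) + η * v (s, b)) (v (s, b)) 0 := by
      simpa using ((hasDerivAt_id (0:ℝ)).mul_const (v (s, b))).const_add (z (s, b))
    simpa using h1.exp
  have hden : HasDerivAt (fun η : ℝ => ∑ b : A, Real.exp (z (s, b) + η * v (s, b)))
      (∑ b : A, Real.exp (z (s, b)) * v (s, b)) 0 :=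
    HasDerivAt.fun_sum fun b _ => hnum b
  have hD : (∑ b : A, Real.exp (z (s, b) + (0:ℝ) * v (s, b))) ≠ 0 := by
    exact (Finset.sum_pos (fun b _ => Real.exp_pos _) Finset.univ_nonempty).ne'
  have := (hnum a).div hden hD
  refine this.congr_deriv ?_
  symm
  have hDpos : (0:ℝ) < ∑ b : A, Real.exp (z (s, b)) := sumexp_pos z s
  have hc : centered z v s a
      = v (s, a) - (∑ b : A, Real.exp (z (s, b)) * v (s, b)) / ∑ b : A, Real.exp (z (s, b)) := by
    simp only [centered, pol, div_mul_eq_mul_div, ← Finset.sum_div]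
  simp only [zero_mul, add_zero] at *
  rw [hc]
  field_simp

lemma contDiff_traj (δ : S → A → S) (s0 : S) {T : ℕ} (z v : S × A → ℝ) (y : Fin T → A) :
    ContDiff ℝ 2 (fun η : ℝ => traj δ s0 (z + η • v) y) := by
  simp only [traj]
  exact contDiff_prod fun t _ => contDiff_pol z v _ _

lemma hasDerivAt_traj (δ : S → A → S) (s0 : S) {T : ℕ} (z v : S × A → ℝ) (y : Fin T → A) :
    HasDerivAt (fun η : ℝ => traj δ s0 (z + η • v) y)
      (traj δ s0 z y * score δ s0 z v y) 0 := by
  classical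
  have h := HasDerivAt.fun_finsetProd (u := (Finset.univ : Finset (Fin T)))
    (f := fun t (η : ℝ) => pol (z + η • v) (st δ s0 y t) (y t))
    (f' := fun t => pol z (st δ s0 y t) (y t) * centered z v (st δ s0 y t) (y t))
    (x := 0) (fun t _ => hasDerivAt_pol z v _ _)
  beta_reduce at h
  refine h.congr_deriv ?_
  symm
  simp only [smul_eq_mul, zero_smul, add_zero]
  rw [score, Finset.mul_sum]
  refine Finset.sum_congr rfl fun t _ => ?_
  rw [← mul_assoc, Finset.prod_erase_mul Finset.univ _ (Finset.mem_univ t), traj]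

end Aux

lemma taylor2 {g : ℝ → ℝ} (hg : ContDiff ℝ 2 g) :
    (fun η : ℝ => g η - (g 0 + η * deriv g 0)) =O[nhds (0:ℝ)] fun η => η ^ 2 := by
  have h2 : (2 : WithTop ℕ∞) = 1 + 1 := by norm_num
  rw [h2] at hg
  obtain ⟨hdiff, -, hg1⟩ := contDiff_succ_iff_deriv.mp hg
  have hd' : DifferentiableAt ℝ (deriv g) 0 := (hg1.differentiable one_ne_zero).differentiableAt
  obtain ⟨C, hC⟩ := hd'.isBigO_sub.bound
  obtain ⟨r, hr, hball⟩ := Metric.eventually_nhds_iff.mp hC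
  rw [isBigO_iff]
  refine ⟨|C|, Metric.eventually_nhds_iff.mpr ⟨r, hr, fun {η} hη => ?_⟩⟩
  have hasd : ∀ x : ℝ, HasDerivAt (fun t => g t - (g 0 + t * deriv g 0))
      (deriv g x - deriv g 0) x := by
    intro x
    have := ((hdiff x).hasDerivAt.sub
      (((hasDerivAt_id x).mul_const (deriv g 0)).const_add (g 0)))
    exact this.congr_deriv (by rw [one_mul])
  set s : Set ℝ := Set.Icc (-|η|) |η| with hs
  have hconv : Convex ℝ s := convex_Icc _ _
  have hmem : ∀ x ∈ s, |x| ≤ |η| := by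
    intro x hx; exact abs_le.mpr ⟨hx.1, hx.2⟩
  have bound : ∀ x ∈ s, ‖deriv g x - deriv g 0‖ ≤ |C| * |η| := by
    intro x hx
    have hxr : dist x 0 < r := by
      simp only [Real.dist_eq, sub_zero]
      exact lt_of_le_of_lt (hmem x hx) (by simpa [Real.dist_eq] using hη)
    have := hball hxr
    simp only [Real.norm_eq_abs, sub_zero] at this
    calc |deriv g x - deriv g 0| ≤ C * |x| := this
      _ ≤ |C| * |η| := by
          apply mul_le_mul (le_abs_self C) (hmem x hx) (abs_nonneg _) (abs_nonneg _)
  have key := hconv.norm_image_sub_le_of_norm_hasDerivWithin_le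
    (f := fun t => g t - (g 0 + t * deriv g 0)) (f' := fun x => deriv g x - deriv g 0)
    (fun x hx => (hasd x).hasDerivWithinAt) bound
    (Set.mem_Icc.mpr ⟨neg_nonpos.mpr (abs_nonneg η), abs_nonneg η⟩)
    (Set.mem_Icc.mpr ⟨neg_abs_le η, le_abs_self η⟩)
  simp only [Real.norm_eq_abs, zero_mul, mul_zero, add_zero, sub_zero, sub_self] at key ⊢
  calc |g η - (g 0 + η * deriv g 0)| ≤ |C| * |η| * |η| := key
    _ = |C| * |η ^ 2| := by rw [abs_pow]; ring

/-- Term (B): as `η → 0`,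
`E_{P_{z+ηv}}[f | E] = E_{P_z}[f | E] + η·Cov_{P_z(·|E)}(f, Ψ_{z,v}) + O(η²)`. -/
theorem stmt_8 {S A : Type*} [Fintype S] [Fintype A] [Nonempty A]
    (δ : S → A → S) (s0 : S) (T : ℕ) (hT : 1 ≤ T)
    (z v : S × A → ℝ) (E : Finset (Fin T → A)) (hE : E.Nonempty)
    (f : (Fin T → A) → ℝ) :
    (fun η : ℝ => condExp δ s0 (z + η • v) E f
        - (condExp δ s0 z E f + η * condCov δ s0 z E f (score δ s0 z v)))
      =O[nhds (0 : ℝ)] (fun η : ℝ => η ^ 2) := by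
  classical
  set g : ℝ → ℝ := fun η => (∑ y ∈ E, traj δ s0 (z + η • v) y * f y) /
      (∑ y ∈ E, traj δ s0 (z + η • v) y) with hg_def
  have hden : ∀ η : ℝ, 0 < ∑ y ∈ E, traj δ s0 (z + η • v) y :=
    fun η => Finset.sum_pos (fun y _ => traj_pos _ _ _ _) hE
  have hgc : ContDiff ℝ 2 g :=
    ContDiff.div (ContDiff.sum fun y _ => (contDiff_traj δ s0 z v y).mul contDiff_const)
      (ContDiff.sum fun y _ => contDiff_traj δ s0 z v y) (fun η => (hden η).ne')
  have hz0 : z + (0:ℝ) • v = z := by simp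
  have hg0 : g 0 = condExp δ s0 z E f := by simp [hg_def, hz0, condExp]
  have hN : HasDerivAt (fun η : ℝ => ∑ y ∈ E, traj δ s0 (z + η • v) y * f y)
      (∑ y ∈ E, traj δ s0 z y * score δ s0 z v y * f y) 0 :=
    HasDerivAt.fun_sum fun y _ => (hasDerivAt_traj δ s0 z v y).mul_const (f y)
  have hD : HasDerivAt (fun η : ℝ => ∑ y ∈ E, traj δ s0 (z + η • v) y)
      (∑ y ∈ E, traj δ s0 z y * score δ s0 z v y) 0 :=
    HasDerivAt.fun_sum fun y _ => hasDerivAt_traj δ s0 z v y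
  have hgd : HasDerivAt g
      (((∑ y ∈ E, traj δ s0 z y * score δ s0 z v y * f y) *
          (∑ y ∈ E, traj δ s0 (z + (0:ℝ) • v) y) -
        (∑ y ∈ E, traj δ s0 (z + (0:ℝ) • v) y * f y) *
          (∑ y ∈ E, traj δ s0 z y * score δ s0 z v y)) /
        (∑ y ∈ E, traj δ s0 (z + (0:ℝ) • v) y) ^ 2) 0 :=
    hN.div hD (hden 0).ne'
  have hd0 : (0:ℝ) < ∑ y ∈ E, traj δ s0 z y := by
    have := hden 0; rwa [hz0] at this
  have hne : (∑ y ∈ E, traj δ s0 z y) ≠ 0 := hd0.ne'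
  have hderiv : deriv g 0 = condCov δ s0 z E f (score δ s0 z v) := by
    rw [hgd.deriv]
    simp only [hz0, condCov, condExp]
    have h1 : (∑ y ∈ E, traj δ s0 z y * score δ s0 z v y * f y)
        = ∑ y ∈ E, traj δ s0 z y * (f y * score δ s0 z v y) :=
      Finset.sum_congr rfl fun y _ => by ring
    rw [h1]
    field_simp
  have hbig := taylor2 hgc
  rw [hg0, hderiv] at hbig
  exact hbig
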